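/- arXiv:2407.06905 — 2 statements merged into one kernel-verified Lean document; each statement's English description precedes it below -/
import Mathlib

section
/- There exists a function D₀ : ℝ³ → ℝ with the following properties: D₀ is continuous and radial (D₀(z) depends only on |z|), D₀ is twice continuously differentiable on ℝ³ ∖ {0}, −ΔD₀(z) = 3^{1/4} ((1+|z|²)^{−1/2} − |z|^{−1}) for every z ≠ 0, D₀(z) → 0 as |z| → ∞, and there is a constant C > 0 with |D₀(z)| ≤ C (1+|z|)^{−1} log(2+|z|) for all z ∈ ℝ³. -/
open MeasureTheory Set Filter

noncomputable section

/-- `ℝ³` as a Euclidean space. -/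
abbrev E3 : Type := EuclideanSpace ℝ (Fin 3)

/-- The Laplacian of `f : ℝ³ → ℝ`, as the sum of the second partial derivatives. -/
noncomputable def lap (f : E3 → ℝ) (x : E3) : ℝ :=
  ∑ i : Fin 3,
    fderiv ℝ (fun y => fderiv ℝ f y (EuclideanSpace.single i 1)) x (EuclideanSpace.single i 1)

/-- The standard bubble `w_{μ,ξ}(x) = 3^{1/4} (μ/(μ² + |x−ξ|²))^{1/2}`. -/
noncomputable def bubble (μ : ℝ) (ξ x : E3) : ℝ :=
  (3 : ℝ) ^ ((1 : ℝ)/4) * (μ / (μ ^ 2 + ‖x - ξ‖ ^ 2)) ^ ((1 : ℝ)/2)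
namespace CorrectorAux

open Real

noncomputable def Fc : ℝ := (3:ℝ)^((1:ℝ)/4) / 2
noncomputable def F (s : ℝ) : ℝ := -Fc * (√(1+s) - √s + arsinh (√s) / √s)
noncomputable def F₁ (s : ℝ) : ℝ :=
  -Fc * (1/(2*√(1+s)) - 1/(2*√s) + 1/(2*s*√(1+s)) - arsinh (√s)/(2*s*√s))
noncomputable def F₂ (s : ℝ) : ℝ :=
  -Fc * (-1/(4*(√(1+s))^3) + 1/(4*s*√s) - 3/(4*s^2*√(1+s)) - 1/(4*s*(√(1+s))^3)
        + 3*arsinh (√s)/(4*s^2*√s))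

lemma Fc_pos : 0 < Fc := by
  rw [Fc]; positivity

lemma rpow_le_three : (3:ℝ)^((1:ℝ)/4) ≤ 3 := by
  calc (3:ℝ)^((1:ℝ)/4) ≤ (3:ℝ)^(1:ℝ) :=
        Real.rpow_le_rpow_of_exponent_le (by norm_num) (by norm_num)
  _ = 3 := Real.rpow_one 3

lemma hasDerivAt_F {s : ℝ} (hs : 0 < s) : HasDerivAt F (F₁ s) s := by
  have hs1 : (0:ℝ) < 1 + s := by linarith
  have hB : (0:ℝ) < √s := Real.sqrt_pos.2 hs
  have hA : (0:ℝ) < √(1+s) := Real.sqrt_pos.2 hs1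
  have h1 : HasDerivAt (fun s : ℝ => √(1+s)) (1/(2*√(1+s))) s := by
    have := (Real.hasDerivAt_sqrt hs1.ne').comp s ((hasDerivAt_id s).const_add 1)
    simpa [Function.comp_def] using this
  have h2 : HasDerivAt (fun s : ℝ => √s) (1/(2*√s)) s := Real.hasDerivAt_sqrt hs.ne'
  have h3 : HasDerivAt (fun s : ℝ => arsinh (√s)) ((√(1+s))⁻¹ * (1/(2*√s))) s := by
    have := (Real.hasDerivAt_arsinh (√s)).comp s h2
    simpa [Function.comp_def, Real.sq_sqrt hs.le] using this
  have h4 := h3.div h2 hB.ne'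
  have h5 := ((h1.sub h2).add h4).const_mul (-Fc)
  convert (show HasDerivAt F _ s from h5) using 1
  rw [F₁, Real.sq_sqrt hs.le]
  field_simp
  ring_nf

lemma hasDerivAt_F₁ {s : ℝ} (hs : 0 < s) : HasDerivAt F₁ (F₂ s) s := by
  have hs1 : (0:ℝ) < 1 + s := by linarith
  have hB : (0:ℝ) < √s := Real.sqrt_pos.2 hs
  have hA : (0:ℝ) < √(1+s) := Real.sqrt_pos.2 hs1
  have h1 : HasDerivAt (fun s : ℝ => √(1+s)) (1/(2*√(1+s))) s := by
    have := (Real.hasDerivAt_sqrt hs1.ne').comp s ((hasDerivAt_id s).const_add 1)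
    simpa [Function.comp_def] using this
  have h2 : HasDerivAt (fun s : ℝ => √s) (1/(2*√s)) s := Real.hasDerivAt_sqrt hs.ne'
  have h3 : HasDerivAt (fun s : ℝ => arsinh (√s)) ((√(1+s))⁻¹ * (1/(2*√s))) s := by
    have := (Real.hasDerivAt_arsinh (√s)).comp s h2
    simpa [Function.comp_def, Real.sq_sqrt hs.le] using this
  have d1 := (hasDerivAt_const s (1:ℝ)).div (h1.const_mul 2) (by positivity)
  have d2 := (hasDerivAt_const s (1:ℝ)).div (h2.const_mul 2) (by positivity)
  have hden1 : HasDerivAt (fun s : ℝ => 2*s*√(1+s)) (2*√(1+s) + 2*s*(1/(2*√(1+s)))) s := by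
    have := ((hasDerivAt_id s).const_mul 2).fun_mul h1
    simpa using this
  have hden2 : HasDerivAt (fun s : ℝ => 2*s*√s) (2*√s + 2*s*(1/(2*√s))) s := by
    have := ((hasDerivAt_id s).const_mul 2).fun_mul h2
    simpa using this
  have d3 := (hasDerivAt_const s (1:ℝ)).div hden1 (by positivity)
  have d4 := h3.div hden2 (by positivity)
  have h5 := (((d1.sub d2).add d3).sub d4).const_mul (-Fc)
  convert (show HasDerivAt F₁ _ s from h5) using 1
  rw [F₂]
  have p : ∀ n : ℕ, √s ^ (2*n) = s^n := fun n => by rw [pow_mul, Real.sq_sqrt hs.le]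
  have q : ∀ n : ℕ, √(1+s) ^ (2*n) = (1+s)^n := fun n => by rw [pow_mul, Real.sq_sqrt hs1.le]
  have p6 : √s^6 = s^3 := p 3
  have p7 : √s^7 = s^3 * √s := by rw [show (7:ℕ) = 2*3+1 by norm_num, pow_succ, p]
  have p8 : √s^8 = s^4 := p 4
  have p9 : √s^9 = s^4 * √s := by rw [show (9:ℕ) = 2*4+1 by norm_num, pow_succ, p]
  have q11 : √(1+s)^11 = (1+s)^5 * √(1+s) := by rw [show (11:ℕ) = 2*5+1 by norm_num, pow_succ, q]
  have q13 : √(1+s)^13 = (1+s)^6 * √(1+s) := by rw [show (13:ℕ) = 2*6+1 by norm_num, pow_succ, q]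
  have q14 : √(1+s)^14 = (1+s)^7 := q 7
  field_simp
  ring_nf
  rw [show √s^3 = √s^2*√s by ring, show √(1+s)^3 = √(1+s)^2*√(1+s) by ring, Real.sq_sqrt hs.le, Real.sq_sqrt hs1.le]
  ring

lemma key {s : ℝ} (hs : 0 < s) :
    -(4*s*F₂ s + 6*F₁ s) = (3:ℝ)^((1:ℝ)/4) * ((1+s)^(-(1:ℝ)/2) - (√s)⁻¹) := by
  have hs1 : (0:ℝ) < 1 + s := by linarith
  have hB : (0:ℝ) < √s := Real.sqrt_pos.2 hs
  have hA : (0:ℝ) < √(1+s) := Real.sqrt_pos.2 hs1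
  have h : ((1:ℝ)+s)^(-(1:ℝ)/2) = (√(1+s))⁻¹ := by
    rw [show (-(1:ℝ)/2) = -(1/2) by norm_num, Real.rpow_neg hs1.le, ← Real.sqrt_eq_rpow]
  rw [h, F₁, F₂, Fc]
  have p : ∀ n : ℕ, √s ^ (2*n) = s^n := fun n => by rw [pow_mul, Real.sq_sqrt hs.le]
  have q : ∀ n : ℕ, √(1+s) ^ (2*n) = (1+s)^n := fun n => by rw [pow_mul, Real.sq_sqrt hs1.le]
  have q7 : √(1+s)^7 = (1+s)^3 * √(1+s) := by rw [show (7:ℕ) = 2*3+1 by norm_num, pow_succ, q]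
  have q9 : √(1+s)^9 = (1+s)^4 * √(1+s) := by rw [show (9:ℕ) = 2*4+1 by norm_num, pow_succ, q]
  have q10 : √(1+s)^10 = (1+s)^5 := q 5
  field_simp
  ring_nf
  rw [Real.sq_sqrt hs1.le]
  ring

noncomputable def NN : E3 → ℝ := fun y => ∑ i : Fin 3, (y i)^2

noncomputable def Nd (y : E3) : E3 →L[ℝ] ℝ :=
  ∑ i : Fin 3, (2 * y i) • (EuclideanSpace.proj i : E3 →L[ℝ] ℝ)

lemma NN_eq (y : E3) : NN y = ‖y‖^2 := by
  rw [NN, EuclideanSpace.norm_eq, Real.sq_sqrt (by positivity)]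
  simp [Real.norm_eq_abs, sq_abs]

lemma hasFDerivAt_NN (y : E3) : HasFDerivAt NN (Nd y) y := by
  have h : ∀ i : Fin 3, HasFDerivAt (fun z : E3 => (z i)^2)
      ((2 * y i) • (EuclideanSpace.proj i : E3 →L[ℝ] ℝ)) y := by
    intro i
    have h0 := (EuclideanSpace.proj (𝕜 := ℝ) (ι := Fin 3) i).hasFDerivAt (x := y)
    have := h0.fun_mul h0
    simpa [two_mul, add_smul, two_smul, pow_two] using this
  exact HasFDerivAt.fun_sum (fun i _ => h i)

lemma Nd_apply (y : E3) (i : Fin 3) : Nd y (EuclideanSpace.single i 1) = 2 * y i := by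
  simp [Nd, ContinuousLinearMap.sum_apply, EuclideanSpace.single_apply]

open scoped Classical in
noncomputable def D0 : E3 → ℝ := fun z => if z = 0 then -(3:ℝ)^((1:ℝ)/4) else F (NN z)

lemma NN_pos {z : E3} (hz : z ≠ 0) : 0 < NN z := by
  rw [NN_eq]; exact pow_pos (norm_pos_iff.2 hz) 2

lemma D0_event {y : E3} (hy : y ≠ 0) : D0 =ᶠ[nhds y] fun z => F (NN z) := by
  filter_upwards [isOpen_compl_singleton.mem_nhds (by simpa using hy)] with z hz
  simp only [D0, if_neg (by simpa using hz)]

lemma D0_fderiv {y : E3} (hy : y ≠ 0) : HasFDerivAt D0 (F₁ (NN y) • Nd y) y :=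
  (((hasDerivAt_F (NN_pos hy)).comp_hasFDerivAt y (hasFDerivAt_NN y)).congr_of_eventuallyEq
    (D0_event hy))

lemma lap_D0 {z : E3} (hz : z ≠ 0) :
    lap D0 z = 4 * NN z * F₂ (NN z) + 6 * F₁ (NN z) := by
  have hstep : ∀ i : Fin 3,
      fderiv ℝ (fun y => fderiv ℝ D0 y (EuclideanSpace.single i 1)) z (EuclideanSpace.single i 1)
        = 4 * (z i)^2 * F₂ (NN z) + 2 * F₁ (NN z) := by
    intro i
    have hev : (fun y => fderiv ℝ D0 y (EuclideanSpace.single i 1)) =ᶠ[nhds z]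
        fun y => F₁ (NN y) * (2 * y i) := by
      filter_upwards [isOpen_compl_singleton.mem_nhds (by simpa using hz)] with y hy
      rw [(D0_fderiv (by simpa using hy)).fderiv]
      simp [Nd_apply]
    rw [hev.fderiv_eq]
    have hf : HasFDerivAt (fun y => F₁ (NN y)) (F₂ (NN z) • Nd z) z :=
      (hasDerivAt_F₁ (NN_pos hz)).comp_hasFDerivAt z (hasFDerivAt_NN z)
    have hg : HasFDerivAt (fun y : E3 => 2 * y i)
        ((2:ℝ) • (EuclideanSpace.proj i : E3 →L[ℝ] ℝ)) z :=
      (EuclideanSpace.proj (𝕜 := ℝ) (ι := Fin 3) i).hasFDerivAt.const_mul 2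
    rw [(hf.fun_mul hg).fderiv]
    simp [Nd_apply, EuclideanSpace.single_apply]
    try ring
  rw [lap]
  simp only [hstep]
  rw [Finset.sum_add_distrib, Finset.sum_const]
  have : ∑ i : Fin 3, 4 * (z i)^2 * F₂ (NN z) = 4 * NN z * F₂ (NN z) := by
    rw [NN, Finset.mul_sum, Finset.sum_mul]
    try ring_nf
  rw [this]
  simp
  try ring

-- real-variable bound lemmas
lemma sqrt_ge_one {r : ℝ} (hr : 0 ≤ r) : 1 ≤ √(1+r^2) := by
  have h := Real.sqrt_le_sqrt (show (1:ℝ) ≤ 1 + r^2 by nlinarith)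
  simpa using h

lemma sqrt_le_one_add {r : ℝ} (hr : 0 ≤ r) : √(1+r^2) ≤ 1 + r := by
  rw [show (1+r:ℝ) = √((1+r)^2) by rw [Real.sqrt_sq (by linarith)]]
  exact Real.sqrt_le_sqrt (by nlinarith)

lemma S_bound {r : ℝ} (hr : 0 ≤ r) : (√(1+r^2) - r) * (1+r) ≤ 1 := by
  have h1 := sqrt_ge_one hr
  have h2 : √(1+r^2) ^ 2 = 1 + r^2 := Real.sq_sqrt (by positivity)
  nlinarith [Real.sqrt_nonneg (1+r^2)]

lemma S_nonneg {r : ℝ} (hr : 0 ≤ r) : 0 ≤ √(1+r^2) - r := by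
  have h2 : √(1+r^2) ^ 2 = 1 + r^2 := Real.sq_sqrt (by positivity)
  nlinarith [Real.sqrt_nonneg (1+r^2)]

lemma arsinh_le_self {r : ℝ} (hr : 0 ≤ r) : arsinh r ≤ r := by
  have := Real.self_le_sinh_iff.2 hr
  calc arsinh r ≤ arsinh (sinh r) := Real.arsinh_le_arsinh.2 this
  _ = r := Real.arsinh_sinh r

lemma arsinh_le_log {r : ℝ} (hr : 0 ≤ r) : arsinh r ≤ 2 * Real.log (2+r) := by
  have h2 : √(1+r^2) ≤ 1 + r := sqrt_le_one_add hr
  have : arsinh r = Real.log (r + √(1+r^2)) := rfl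
  rw [this, show 2 * Real.log (2+r) = Real.log ((2+r)^2) by rw [Real.log_pow]; push_cast; ring]
  apply Real.log_le_log (by positivity)
  nlinarith

lemma log2_ge : (0.6931:ℝ) ≤ Real.log 2 := le_of_lt (by
  have := Real.log_two_gt_d9; linarith)

/-- The main pointwise bound. -/
lemma D0_bound (z : E3) : |D0 z| ≤ 10 * (1+‖z‖)⁻¹ * Real.log (2+‖z‖) := by
  set r := ‖z‖ with hr
  have hr0 : 0 ≤ r := norm_nonneg z
  have hlog : Real.log 2 ≤ Real.log (2+r) := Real.log_le_log (by norm_num) (by linarith)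
  have h2 := log2_ge
  have hpos : (0:ℝ) < 1 + r := by linarith
  rw [show 10 * (1+r)⁻¹ * Real.log (2+r) = (10 * Real.log (2+r)) / (1+r) by ring,
    le_div_iff₀ hpos]
  by_cases hz : z = 0
  · subst hz
    have hD00 : D0 (0:E3) = -(3:ℝ)^((1:ℝ)/4) := by simp [D0]
    rw [hD00, abs_neg, abs_of_pos (by positivity)]
    have h3 := rpow_le_three
    simp only [hr, norm_zero] at *
    nlinarith
  · have hNz := NN_pos hz
    have hrpos : 0 < r := norm_pos_iff.2 hz
    have hsq : √(NN z) = r := by rw [NN_eq, Real.sqrt_sq hr0]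
    have hsr : √(r^2) = r := Real.sqrt_sq hr0
    have hD : D0 z = -Fc * (√(1+r^2) - r + arsinh r / r) := by
      simp only [D0, if_neg hz, F, NN_eq, ← hr, hsr]
    have hS0 := S_nonneg hr0
    have hQ0 : 0 ≤ arsinh r / r := div_nonneg (Real.arsinh_nonneg_iff.2 hr0) hr0
    have habs : |D0 z| = Fc * (√(1+r^2) - r + arsinh r / r) := by
      rw [hD, abs_mul, abs_neg, abs_of_pos Fc_pos, abs_of_nonneg (by linarith)]
    rw [habs]
    have hFc : Fc ≤ 3/2 := by
      rw [Fc]; have := rpow_le_three; linarith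
    have hS := S_bound hr0
    have hQr : arsinh r / r * r = arsinh r := div_mul_cancel₀ _ hrpos.ne'
    rcases le_or_gt r 1 with h1 | h1
    · -- small r : arsinh r / r ≤ 1
      have hQ1 : arsinh r / r ≤ 1 := by
        rw [div_le_one hrpos]; exact arsinh_le_self hr0
      have hlhs : Fc * (√(1+r^2) - r + arsinh r / r) * (1+r) ≤ (3/2) * (1 + 2) := by
        have e1 : (√(1+r^2) - r) * (1+r) ≤ 1 := hS
        have e2 : (arsinh r / r) * (1+r) ≤ 1 * 2 := by
          apply mul_le_mul hQ1 (by linarith) (by linarith) (by norm_num)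
        nlinarith [Fc_pos, mul_nonneg hS0 hpos.le, mul_nonneg hQ0 hpos.le]
      nlinarith
    · -- large r : arsinh r / r * (1+r) ≤ 4 log(2+r)
      have hal := arsinh_le_log hr0
      have ha0 : 0 ≤ arsinh r := Real.arsinh_nonneg_iff.2 hr0
      have e2 : (arsinh r / r) * (1+r) ≤ 4 * Real.log (2+r) := by
        rw [div_mul_eq_mul_div, div_le_iff₀ hrpos]
        have : arsinh r * (1+r) ≤ (2 * Real.log (2+r)) * (2*r) := by
          apply mul_le_mul hal (by linarith) (by linarith) (by nlinarith)
        linarith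
      have e1 : (√(1+r^2) - r) * (1+r) ≤ 1 := hS
      have hlogpos : 0 < Real.log (2+r) := by linarith
      nlinarith [Fc_pos, mul_nonneg hS0 hpos.le, mul_nonneg hQ0 hpos.le]


lemma contDiff_NN : ContDiff ℝ 2 NN := by
  apply ContDiff.sum
  intro i _
  exact ((EuclideanSpace.proj (𝕜 := ℝ) (ι := Fin 3) i).contDiff).pow 2

lemma contDiffOn_F : ContDiffOn ℝ 2 F (Ioi 0) := by
  intro s hs
  have hs0 : (0:ℝ) < s := hs
  have hs1 : (0:ℝ) < 1 + s := by linarith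
  have hB : (0:ℝ) < √s := Real.sqrt_pos.2 hs0
  apply ContDiffAt.contDiffWithinAt
  have c1 : ContDiffAt ℝ 2 (fun s : ℝ => √(1+s)) s := by
    have := (Real.contDiffAt_sqrt (n := 2) hs1.ne').comp s
      ((contDiff_const.add contDiff_id).contDiffAt (x := s))
    simpa [Function.comp_def] using this
  have c2 : ContDiffAt ℝ 2 (fun s : ℝ => √s) s := Real.contDiffAt_sqrt hs0.ne'
  have c3 : ContDiffAt ℝ 2 (fun s : ℝ => Real.arsinh (√s)) s :=
    (Real.contDiff_arsinh (n := 2)).contDiffAt.comp s c2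
  exact contDiffAt_const.mul (((c1.sub c2).add (c3.div c2 hB.ne')))

lemma contDiffOn_D0 : ContDiffOn ℝ 2 D0 {(0 : E3)}ᶜ := by
  have hcomp : ContDiffOn ℝ 2 (F ∘ NN) {(0 : E3)}ᶜ :=
    contDiffOn_F.comp contDiff_NN.contDiffOn
      (fun z hz => NN_pos (by simpa using hz))
  exact hcomp.congr (fun z hz => by simp only [D0, if_neg (by simpa using hz)]; rfl)

lemma continuous_D0 : Continuous D0 := by
  rw [continuous_iff_continuousAt]
  intro x
  by_cases hx : x = 0
  · subst hx
    rw [← continuousWithinAt_compl_self]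
    have hD00 : D0 (0:E3) = -(3:ℝ)^((1:ℝ)/4) := by simp [D0]
    rw [ContinuousWithinAt, hD00]
    have hev : ∀ z : E3, z ≠ 0 →
        D0 z = -Fc * (√(1+‖z‖^2) - ‖z‖ + Real.arsinh ‖z‖ / ‖z‖) := by
      intro z hz
      have hsr : √(‖z‖^2) = ‖z‖ := Real.sqrt_sq (norm_nonneg z)
      simp only [D0, if_neg hz, F, NN_eq, hsr]
    have hn : Tendsto (fun z : E3 => ‖z‖) (nhdsWithin 0 {(0:E3)}ᶜ) (nhds 0) := by
      have := (continuous_norm.tendsto (0 : E3)).mono_left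
        (nhdsWithin_le_nhds (s := {(0:E3)}ᶜ))
      simpa using this
    have hslope : Tendsto (fun r : ℝ => Real.arsinh r / r)
        (nhdsWithin 0 {(0:ℝ)}ᶜ) (nhds 1) := by
      have h := Real.hasDerivAt_arsinh 0
      rw [hasDerivAt_iff_tendsto_slope] at h
      have h' : Tendsto (slope Real.arsinh 0) (nhdsWithin 0 {(0:ℝ)}ᶜ) (nhds 1) := by
        simpa using h
      apply h'.congr
      intro r
      simp [slope_def_field, Real.arsinh_zero]
    have hmap : Tendsto (fun z : E3 => ‖z‖) (nhdsWithin 0 {(0:E3)}ᶜ)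
        (nhdsWithin 0 {(0:ℝ)}ᶜ) := by
      apply tendsto_nhdsWithin_of_tendsto_nhds_of_eventually_within _ hn
      filter_upwards [self_mem_nhdsWithin] with z hz
      simpa using norm_ne_zero_iff.2 (by simpa using hz)
    have hq : Tendsto (fun z : E3 => Real.arsinh ‖z‖ / ‖z‖)
        (nhdsWithin 0 {(0:E3)}ᶜ) (nhds 1) := hslope.comp hmap
    have h1 : Tendsto (fun z : E3 => √(1+‖z‖^2)) (nhdsWithin 0 {(0:E3)}ᶜ) (nhds 1) := by
      have hc : Continuous (fun z : E3 => √(1+‖z‖^2)) :=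
        Real.continuous_sqrt.comp (continuous_const.add (continuous_norm.pow 2))
      have := (hc.tendsto (0:E3)).mono_left (nhdsWithin_le_nhds (s := {(0:E3)}ᶜ))
      simpa using this
    have hT : Tendsto (fun z : E3 => -Fc * (√(1+‖z‖^2) - ‖z‖ + Real.arsinh ‖z‖ / ‖z‖))
        (nhdsWithin 0 {(0:E3)}ᶜ) (nhds (-Fc * ((1 - 0) + 1))) :=
      (((h1.sub hn).add hq)).const_mul (-Fc)
    have hval : -Fc * ((1 - 0) + 1) = -(3:ℝ)^((1:ℝ)/4) := by rw [Fc]; ring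
    rw [hval] at hT
    apply hT.congr'
    filter_upwards [self_mem_nhdsWithin] with z hz
    exact (hev z (by simpa using hz)).symm
  · exact (contDiffOn_D0.continuousOn.continuousAt
      (isOpen_compl_singleton.mem_nhds (by simpa using hx)))

lemma D0_radial (z z' : E3) (h : ‖z‖ = ‖z'‖) : D0 z = D0 z' := by
  by_cases hz : z = 0
  · subst hz
    have : z' = 0 := by rwa [norm_zero, eq_comm, norm_eq_zero] at h
    rw [this]
  · have hz' : z' ≠ 0 := by
      intro h0; rw [h0] at h; exact hz (by simpa using h)
    simp only [D0, if_neg hz, if_neg hz', NN_eq, h]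

lemma D0_lap (z : E3) (hz : z ≠ 0) : -(lap D0 z) =
    (3 : ℝ) ^ ((1 : ℝ)/4) * (((1 : ℝ) + ‖z‖ ^ 2) ^ (-(1 : ℝ)/2) - ‖z‖⁻¹) := by
  rw [lap_D0 hz]
  have h := key (NN_pos hz)
  have hsq : √(NN z) = ‖z‖ := by rw [NN_eq, Real.sqrt_sq (norm_nonneg z)]
  rw [hsq] at h
  rw [NN_eq] at h ⊢
  convert h using 4 <;> ring

lemma D0_cocompact : Filter.Tendsto D0 (Filter.cocompact E3) (nhds 0) := by
  have hb : Tendsto (fun r : ℝ => 10 * (1+r)⁻¹ * Real.log (2+r)) atTop (nhds 0) := by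
    have h1 : Tendsto (fun r : ℝ => Real.log (2+r) / (2+r)) atTop (nhds 0) := by
      have hlo : (fun r : ℝ => Real.log (2+r)) =o[atTop] (fun r : ℝ => 2+r) :=
        Real.isLittleO_log_id_atTop.comp_tendsto (tendsto_atTop_add_const_left _ 2 tendsto_id)
      exact hlo.tendsto_div_nhds_zero
    have h2 : Tendsto (fun r : ℝ => (2+r) / (1+r)) atTop (nhds 1) := by
      have : (fun r : ℝ => (2+r)/(1+r)) =ᶠ[atTop] (fun r : ℝ => 1 + (1+r)⁻¹) := by
        filter_upwards [eventually_gt_atTop 0] with r hr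
        field_simp
        ring
      rw [tendsto_congr' this]
      have : Tendsto (fun r : ℝ => (1+r)⁻¹) atTop (nhds 0) :=
        tendsto_inv_atTop_zero.comp (tendsto_atTop_add_const_left _ 1 tendsto_id)
      simpa using (tendsto_const_nhds (x := (1:ℝ))).add this
    have h3 := (h1.mul h2).const_mul (10:ℝ)
    simp only [mul_zero, zero_mul] at h3
    apply h3.congr'
    filter_upwards [eventually_gt_atTop 0] with r hr
    field_simp
  have hcomp : Tendsto (fun z : E3 => 10 * (1+‖z‖)⁻¹ * Real.log (2+‖z‖))
      (Filter.cocompact E3) (nhds 0) := hb.comp tendsto_norm_cocompact_atTop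
  apply squeeze_zero_norm (fun z => ?_) hcomp
  simpa [Real.norm_eq_abs] using D0_bound z

end CorrectorAux

/-- existence of the radial corrector `D₀`: a continuous radial function on ℝ³,
twice continuously differentiable away from the origin, with
`−ΔD₀(z) = 3^{1/4}((1+|z|²)^{−1/2} − |z|^{−1})` for `z ≠ 0`, `D₀(z) → 0` as `|z| → ∞`, and
`|D₀(z)| ≤ C(1+|z|)^{−1} log(2+|z|)` for all `z`. -/
theorem corrector_exists :
    ∃ D₀ : E3 → ℝ,
      Continuous D₀ ∧
      (∀ z z' : E3, ‖z‖ = ‖z'‖ → D₀ z = D₀ z') ∧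
      ContDiffOn ℝ 2 D₀ {(0 : E3)}ᶜ ∧
      (∀ z : E3, z ≠ 0 → -(lap D₀ z) =
        (3 : ℝ) ^ ((1 : ℝ)/4) * (((1 : ℝ) + ‖z‖ ^ 2) ^ (-(1 : ℝ)/2) - ‖z‖⁻¹)) ∧
      Filter.Tendsto D₀ (Filter.cocompact E3) (nhds 0) ∧
      ∃ C > 0, ∀ z : E3, |D₀ z| ≤ C * (1 + ‖z‖)⁻¹ * Real.log (2 + ‖z‖) := by
  refine ⟨CorrectorAux.D0, CorrectorAux.continuous_D0, CorrectorAux.D0_radial,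
    CorrectorAux.contDiffOn_D0, CorrectorAux.D0_lap, CorrectorAux.D0_cocompact,
    10, by norm_num, CorrectorAux.D0_bound⟩

end
end

section
/- The integral ∫_{ℝ³} [ w_{1,0}(x) (|x|^{−1} − (1+|x|²)^{−1/2}) + (1/2) w_{1,0}(x)⁵ |x| ] dx is finite and strictly positive, where w_{1,0}(x) = 3^{1/4}(1+|x|²)^{−1/2}. -/
open MeasureTheory Set Filter

noncomputable section

namespace A2Aux

noncomputable def g2 (t : ℝ) : ℝ := ((1:ℝ) + t ^ 2) ^ (-(2:ℝ)/3)

lemma g2_nonneg (t : ℝ) : 0 ≤ g2 t := by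
  unfold g2; positivity

lemma g2_integrable : Integrable g2 := by
  have h := integrable_rpow_neg_one_add_norm_sq (E := ℝ) (μ := volume) (r := 4/3)
    (by rw [Module.finrank_self]; norm_num)
  have he : (fun x : ℝ => ((1:ℝ) + ‖x‖ ^ 2) ^ (-(4/3:ℝ) / 2)) = g2 := by
    funext t
    unfold g2
    rw [Real.norm_eq_abs, sq_abs]
    congr 1
    norm_num
  rwa [he] at h

noncomputable def g1 (t : ℝ) : ℝ := |t| ^ (-(1:ℝ)/3) * ((1:ℝ) + t ^ 2) ^ (-(1:ℝ)/2)

lemma g1_nonneg (t : ℝ) : 0 ≤ g1 t := by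
  unfold g1
  have h1 : (0:ℝ) ≤ |t| := abs_nonneg t
  positivity

lemma g1_even (t : ℝ) : g1 (-t) = g1 t := by
  unfold g1; rw [abs_neg, neg_pow]; ring_nf

lemma g1_measurable : Measurable g1 := by
  unfold g1; fun_prop

lemma g1_integrableOn_Ioi : IntegrableOn g1 (Ioi (0:ℝ)) := by
  rw [← Ioc_union_Ioi_eq_Ioi (zero_le_one (α := ℝ))]
  refine IntegrableOn.union ?_ ?_
  · -- on Ioc 0 1, dominate by t ^ (-1/3)
    have h0 : IntegrableOn (fun t : ℝ => t ^ (-(1:ℝ)/3)) (Ioc (0:ℝ) 1) := by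
      have h := intervalIntegral.intervalIntegrable_rpow' (a := 0) (b := 1)
        (r := -(1:ℝ)/3) (by norm_num)
      rwa [intervalIntegrable_iff, uIoc_of_le zero_le_one] at h
    refine h0.mono' (g1_measurable.aestronglyMeasurable.restrict) ?_
    filter_upwards [ae_restrict_mem measurableSet_Ioc] with t ht
    rw [Real.norm_eq_abs, abs_of_nonneg (g1_nonneg t)]
    unfold g1
    rw [abs_of_pos ht.1]
    have h2 : ((1:ℝ) + t ^ 2) ^ (-(1:ℝ)/2) ≤ 1 :=
      Real.rpow_le_one_of_one_le_of_nonpos (by nlinarith) (by norm_num)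
    have h3 : (0:ℝ) ≤ t ^ (-(1:ℝ)/3) := Real.rpow_nonneg ht.1.le _
    calc t ^ (-(1:ℝ)/3) * ((1:ℝ) + t ^ 2) ^ (-(1:ℝ)/2) ≤ t ^ (-(1:ℝ)/3) * 1 :=
          mul_le_mul_of_nonneg_left h2 h3
      _ = t ^ (-(1:ℝ)/3) := mul_one _
  · -- on Ioi 1, dominate by t ^ (-4/3)
    have h0 : IntegrableOn (fun t : ℝ => t ^ (-(4:ℝ)/3)) (Ioi (1:ℝ)) :=
      integrableOn_Ioi_rpow_of_lt (by norm_num) one_pos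
    refine h0.mono' (g1_measurable.aestronglyMeasurable.restrict) ?_
    filter_upwards [ae_restrict_mem measurableSet_Ioi] with t ht
    rw [Real.norm_eq_abs, abs_of_nonneg (g1_nonneg t)]
    have ht0 : (0:ℝ) < t := lt_trans one_pos ht
    unfold g1
    rw [abs_of_pos ht0]
    have h2 : ((1:ℝ) + t ^ 2) ^ (-(1:ℝ)/2) ≤ (t ^ 2 : ℝ) ^ (-(1:ℝ)/2) :=
      Real.rpow_le_rpow_of_nonpos (by positivity) (by nlinarith) (by norm_num)
    have h3 : ((t:ℝ) ^ 2) ^ (-(1:ℝ)/2) = t ^ (-(1:ℝ)) := by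
      rw [← Real.rpow_natCast t 2, ← Real.rpow_mul ht0.le]
      norm_num
    have h4 : (0:ℝ) ≤ t ^ (-(1:ℝ)/3) := Real.rpow_nonneg ht0.le _
    calc t ^ (-(1:ℝ)/3) * ((1:ℝ) + t ^ 2) ^ (-(1:ℝ)/2)
        ≤ t ^ (-(1:ℝ)/3) * t ^ (-(1:ℝ)) := by
          rw [← h3]; exact mul_le_mul_of_nonneg_left h2 h4
      _ = t ^ (-(4:ℝ)/3) := by
          rw [← Real.rpow_add ht0]; norm_num

lemma g1_integrable : Integrable g1 := by
  have hpos := g1_integrableOn_Ioi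
  have hneg : IntegrableOn g1 (Iio (0:ℝ)) := by
    have h := integrableOn_map_equiv (MeasurableEquiv.neg ℝ) (f := g1) (μ := volume)
      (s := Iio 0)
    have hcoe : ⇑(MeasurableEquiv.neg ℝ) = (Neg.neg : ℝ → ℝ) := rfl
    rw [hcoe, Measure.map_neg_eq_self] at h
    have hpre : (Neg.neg : ℝ → ℝ) ⁻¹' (Iio 0) = Ioi 0 := by
      ext t; simp
    have hcomp : g1 ∘ (Neg.neg : ℝ → ℝ) = g1 := funext fun t => g1_even t
    rw [hpre, hcomp] at h
    exact h.mpr hpos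
  rw [← integrableOn_univ, ← Set.Iio_union_Ici (a := (0:ℝ))]
  exact hneg.union (hpos.congr_set_ae Ioi_ae_eq_Ici.symm)


lemma prod_integrable (g : ℝ → ℝ) (hg : Integrable g) :
    Integrable (fun x : E3 => ∏ i, g (x i)) := by
  have hpi : Integrable (fun y : Fin 3 → ℝ => ∏ i, g (y i)) :=
    Integrable.fintype_prod (f := fun _ : Fin 3 => g) (fun _ => hg)
  have h := (EuclideanSpace.volume_preserving_symm_measurableEquiv_toLp (Fin 3)).integrable_comp_emb
    (MeasurableEquiv.toLp 2 (Fin 3 → ℝ)).symm.measurableEmbedding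
    (g := fun y : Fin 3 → ℝ => ∏ i, g (y i))
  exact h.mpr hpi

lemma coord_zero_null (i : Fin 3) : volume {x : E3 | x i = 0} = 0 := by
  have hset : {x : E3 | x i = 0} =
      (LinearMap.ker ((EuclideanSpace.proj i : E3 →L[ℝ] ℝ) : E3 →ₗ[ℝ] ℝ) : Set E3) := by
    ext x
    simp [LinearMap.mem_ker, PiLp.proj_apply]
  rw [hset]
  apply Measure.addHaar_submodule
  intro h
  have hm : (EuclideanSpace.single i (1:ℝ) : E3) ∈
      LinearMap.ker ((EuclideanSpace.proj i : E3 →L[ℝ] ℝ) : E3 →ₗ[ℝ] ℝ) := by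
    rw [h]; trivial
  simp [LinearMap.mem_ker, PiLp.proj_apply, EuclideanSpace.single_apply] at hm

lemma coord_le_norm (x : E3) (i : Fin 3) : |x i| ≤ ‖x‖ := by
  rw [EuclideanSpace.norm_eq]
  calc |x i| = Real.sqrt ((x i) ^ 2) := (Real.sqrt_sq_eq_abs _).symm
    _ ≤ Real.sqrt (∑ j, ‖x j‖ ^ 2) := by
        apply Real.sqrt_le_sqrt
        have h := Finset.single_le_sum (f := fun j => ‖x j‖ ^ 2)
          (fun j _ => sq_nonneg ‖x j‖) (Finset.mem_univ i)
        simpa [Real.norm_eq_abs, sq_abs] using h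


lemma rpow_neg_half (a : ℝ) (ha : 0 ≤ a) : a ^ (-(1:ℝ)/2) = (Real.sqrt a)⁻¹ := by
  rw [neg_div, Real.rpow_neg ha, Real.sqrt_eq_rpow]

lemma bubble_eq (x : E3) : bubble 1 0 x = 3 ^ ((1:ℝ)/4) * (Real.sqrt (1 + ‖x‖ ^ 2))⁻¹ := by
  unfold bubble
  rw [sub_zero, one_pow]
  congr 1
  rw [Real.sqrt_eq_rpow, one_div, Real.inv_rpow (by positivity)]

lemma pointwise_pos (x : E3) (hx : x ≠ 0) :
    0 < bubble 1 0 x * (‖x‖⁻¹ - ((1 : ℝ) + ‖x‖ ^ 2) ^ (-(1 : ℝ)/2)) +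
      (1 / 2) * (bubble 1 0 x) ^ 5 * ‖x‖ := by
  have hs : 0 < ‖x‖ := norm_pos_iff.mpr hx
  set s := ‖x‖ with hsdef
  set q := Real.sqrt (1 + s ^ 2) with hqdef
  have hq2 : q ^ 2 = 1 + s ^ 2 := Real.sq_sqrt (by positivity)
  have hq0 : 0 < q := Real.sqrt_pos.mpr (by positivity)
  have hsq : s ≤ q := by
    nlinarith [hq2, hs, hq0]
  have hb : 0 < bubble 1 0 x := by
    rw [bubble_eq]
    positivity
  have hgap : 0 ≤ s⁻¹ - ((1 : ℝ) + s ^ 2) ^ (-(1 : ℝ)/2) := by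
    rw [rpow_neg_half _ (by positivity), ← hqdef, sub_nonneg]
    exact inv_anti₀ hs hsq
  have h2 : 0 < (1 / 2) * (bubble 1 0 x) ^ 5 * s :=
    mul_pos (mul_pos (by norm_num) (pow_pos hb 5)) hs
  exact add_pos_of_nonneg_of_pos (mul_nonneg hb.le hgap) h2

lemma pointwise_bound (x : E3) (hx : ∀ i, x i ≠ 0) :
    bubble 1 0 x * (‖x‖⁻¹ - ((1 : ℝ) + ‖x‖ ^ 2) ^ (-(1 : ℝ)/2)) +
      (1 / 2) * (bubble 1 0 x) ^ 5 * ‖x‖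
    ≤ (3:ℝ) ^ ((1:ℝ)/4) * ∏ i, g1 (x i) +
      ((3:ℝ) ^ ((1:ℝ)/4)) ^ 5 / 2 * ∏ i, g2 (x i) := by
  have hx0 : x ≠ 0 := fun h => hx 0 (by rw [h]; rfl)
  have hs : 0 < ‖x‖ := norm_pos_iff.mpr hx0
  set c : ℝ := (3:ℝ) ^ ((1:ℝ)/4) with hcdef
  have hc : 0 < c := by positivity
  set s := ‖x‖ with hsdef
  set q := Real.sqrt (1 + s ^ 2) with hqdef
  have hq2 : q ^ 2 = 1 + s ^ 2 := Real.sq_sqrt (by positivity)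
  have hq0 : 0 < q := Real.sqrt_pos.mpr (by positivity)
  have hsq : s ≤ q := by
    nlinarith [hq2, hs, hq0]
  -- coordinate facts
  have hui : ∀ i, 0 < |x i| := fun i => abs_pos.mpr (hx i)
  have hus : ∀ i, |x i| ≤ s := fun i => coord_le_norm x i
  have hxs2 : ∀ i, (x i) ^ 2 ≤ s ^ 2 := fun i => by
    rw [← sq_abs]
    exact pow_le_pow_left₀ (abs_nonneg _) (hus i) 2
  have hv1 : ∀ i, (1:ℝ) ≤ Real.sqrt (1 + (x i) ^ 2) := fun i => by
    have h := Real.sqrt_le_sqrt (show (1:ℝ) ≤ 1 + x i ^ 2 by nlinarith [sq_nonneg (x i)])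
    rwa [Real.sqrt_one] at h
  have hv0 : ∀ i, (0:ℝ) < Real.sqrt (1 + (x i) ^ 2) := fun i =>
    lt_of_lt_of_le one_pos (hv1 i)
  have hvq : ∀ i, Real.sqrt (1 + (x i) ^ 2) ≤ q := fun i =>
    Real.sqrt_le_sqrt (by nlinarith [hxs2 i])
  -- rewrite bubble and the rpow
  rw [bubble_eq, ← hsdef, ← hqdef, ← hcdef, rpow_neg_half _ (by positivity), ← hqdef]
  -- claim A
  have g1eq : ∀ i, g1 (x i) = |x i| ^ (-(1:ℝ)/3) * (Real.sqrt (1 + (x i) ^ 2))⁻¹ := by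
    intro i
    unfold g1
    rw [rpow_neg_half _ (by positivity)]
  have claimA : c * q⁻¹ * (s⁻¹ - q⁻¹) ≤ c * ∏ i, g1 (x i) := by
    have key : s⁻¹ - q⁻¹ ≤ s⁻¹ * (q⁻¹ * q⁻¹) := by
      have hcl : (s⁻¹ - q⁻¹) * (s * (q * q)) ≤ (s⁻¹ * (q⁻¹ * q⁻¹)) * (s * (q * q)) := by
        have e1 : (s⁻¹ - q⁻¹) * (s * (q * q)) = q * q - s * q := by
          field_simp
        have e2 : (s⁻¹ * (q⁻¹ * q⁻¹)) * (s * (q * q)) = 1 := by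
          field_simp
        rw [e1, e2]
        nlinarith
      exact le_of_mul_le_mul_right hcl (by positivity)
    have step1 : q⁻¹ * (s⁻¹ - q⁻¹) ≤ s⁻¹ * (q⁻¹ * q⁻¹ * q⁻¹) := by
      calc q⁻¹ * (s⁻¹ - q⁻¹) ≤ q⁻¹ * (s⁻¹ * (q⁻¹ * q⁻¹)) :=
            mul_le_mul_of_nonneg_left key (by positivity)
        _ = s⁻¹ * (q⁻¹ * q⁻¹ * q⁻¹) := by ring
    -- s⁻¹ ≤ ∏ |x i| ^ (-1/3)
    have hsu : ∀ i, s ^ (-(1:ℝ)/3) ≤ |x i| ^ (-(1:ℝ)/3) := fun i =>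
      Real.rpow_le_rpow_of_nonpos (hui i) (hus i) (by norm_num)
    have hs3 : s ^ (-(1:ℝ)/3) * s ^ (-(1:ℝ)/3) * s ^ (-(1:ℝ)/3) = s⁻¹ := by
      rw [← Real.rpow_add hs, ← Real.rpow_add hs]
      norm_num
      rw [Real.rpow_neg hs.le, Real.rpow_one]
    have hsprod : s⁻¹ ≤ |x 0| ^ (-(1:ℝ)/3) * |x 1| ^ (-(1:ℝ)/3) * |x 2| ^ (-(1:ℝ)/3) := by
      rw [← hs3]
      have h0 : (0:ℝ) ≤ s ^ (-(1:ℝ)/3) := Real.rpow_nonneg hs.le _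
      exact mul_le_mul (mul_le_mul (hsu 0) (hsu 1) h0 (Real.rpow_nonneg (abs_nonneg _) _))
        (hsu 2) h0 (by positivity)
    have hqprod : q⁻¹ * q⁻¹ * q⁻¹ ≤ (Real.sqrt (1 + (x 0) ^ 2))⁻¹ *
        (Real.sqrt (1 + (x 1) ^ 2))⁻¹ * (Real.sqrt (1 + (x 2) ^ 2))⁻¹ := by
      have hqv : ∀ i, q⁻¹ ≤ (Real.sqrt (1 + (x i) ^ 2))⁻¹ := fun i =>
        inv_anti₀ (hv0 i) (hvq i)
      have h0 : (0:ℝ) ≤ q⁻¹ := by positivity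
      exact mul_le_mul (mul_le_mul (hqv 0) (hqv 1) h0 (by positivity))
        (hqv 2) h0 (by positivity)
    have hfinal : s⁻¹ * (q⁻¹ * q⁻¹ * q⁻¹) ≤ ∏ i, g1 (x i) := by
      rw [Fin.prod_univ_three]
      rw [g1eq 0, g1eq 1, g1eq 2]
      calc s⁻¹ * (q⁻¹ * q⁻¹ * q⁻¹)
          ≤ (|x 0| ^ (-(1:ℝ)/3) * |x 1| ^ (-(1:ℝ)/3) * |x 2| ^ (-(1:ℝ)/3)) *
            ((Real.sqrt (1 + (x 0) ^ 2))⁻¹ * (Real.sqrt (1 + (x 1) ^ 2))⁻¹ *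
             (Real.sqrt (1 + (x 2) ^ 2))⁻¹) := by
            apply mul_le_mul hsprod hqprod (by positivity) (by positivity)
        _ = |x 0| ^ (-(1:ℝ)/3) * (Real.sqrt (1 + x 0 ^ 2))⁻¹ *
            (|x 1| ^ (-(1:ℝ)/3) * (Real.sqrt (1 + x 1 ^ 2))⁻¹) *
            (|x 2| ^ (-(1:ℝ)/3) * (Real.sqrt (1 + x 2 ^ 2))⁻¹) := by ring
    calc c * q⁻¹ * (s⁻¹ - q⁻¹) = c * (q⁻¹ * (s⁻¹ - q⁻¹)) := by ring
      _ ≤ c * (s⁻¹ * (q⁻¹ * q⁻¹ * q⁻¹)) := mul_le_mul_of_nonneg_left step1 hc.le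
      _ ≤ c * ∏ i, g1 (x i) := mul_le_mul_of_nonneg_left hfinal hc.le
  -- claim B
  have claimB : (1 / 2) * (c * q⁻¹) ^ 5 * s ≤ c ^ 5 / 2 * ∏ i, g2 (x i) := by
    have hA0 : (0:ℝ) < 1 + s ^ 2 := by positivity
    have hw : ∀ i, ((1:ℝ) + s ^ 2) ^ (-(2:ℝ)/3) ≤ g2 (x i) := fun i =>
      Real.rpow_le_rpow_of_nonpos (by positivity) (by nlinarith [hxs2 i]) (by norm_num)
    have hw0 : (0:ℝ) ≤ ((1:ℝ) + s ^ 2) ^ (-(2:ℝ)/3) := Real.rpow_nonneg hA0.le _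
    have hw3 : ((1:ℝ) + s ^ 2) ^ (-(2:ℝ)/3) * ((1:ℝ) + s ^ 2) ^ (-(2:ℝ)/3) *
        ((1:ℝ) + s ^ 2) ^ (-(2:ℝ)/3) = (q⁻¹) ^ 4 := by
      rw [← Real.rpow_add hA0, ← Real.rpow_add hA0]
      norm_num
      rw [← hq2]
      ring
    have hg2nonneg : ∀ i, (0:ℝ) ≤ g2 (x i) := fun i =>
      Real.rpow_nonneg (by positivity) _
    have hprod : (q⁻¹) ^ 4 ≤ ∏ i, g2 (x i) := by
      rw [Fin.prod_univ_three, ← hw3]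
      exact mul_le_mul (mul_le_mul (hw 0) (hw 1) hw0 (hg2nonneg 0)) (hw 2) hw0
        (mul_nonneg (hg2nonneg 0) (hg2nonneg 1))
    have hq5 : (q⁻¹) ^ 5 * s ≤ (q⁻¹) ^ 4 := by
      have : (q⁻¹) ^ 5 * s = (q⁻¹) ^ 4 * (q⁻¹ * s) := by ring
      rw [this]
      have h1 : q⁻¹ * s ≤ 1 := by
        rw [← inv_mul_cancel₀ hq0.ne']
        exact mul_le_mul_of_nonneg_left hsq (by positivity)
      calc (q⁻¹) ^ 4 * (q⁻¹ * s) ≤ (q⁻¹) ^ 4 * 1 :=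
            mul_le_mul_of_nonneg_left h1 (by positivity)
        _ = (q⁻¹) ^ 4 := mul_one _
    calc (1 / 2) * (c * q⁻¹) ^ 5 * s = c ^ 5 / 2 * ((q⁻¹) ^ 5 * s) := by ring
      _ ≤ c ^ 5 / 2 * (q⁻¹) ^ 4 := mul_le_mul_of_nonneg_left hq5 (by positivity)
      _ ≤ c ^ 5 / 2 * ∏ i, g2 (x i) := mul_le_mul_of_nonneg_left hprod (by positivity)
  exact add_le_add claimA claimB


end A2Aux

/-- the integral
`∫_{ℝ³} [ w_{1,0}(x)(|x|⁻¹ − (1+|x|²)^{−1/2}) + (1/2) w_{1,0}(x)⁵ |x| ] dx`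
is finite and strictly positive, where `w_{1,0}(x) = 3^{1/4}(1+|x|²)^{−1/2}`. -/
theorem a2_integral_finite_pos :
    MeasureTheory.Integrable (fun x : E3 =>
      bubble 1 0 x * (‖x‖⁻¹ - ((1 : ℝ) + ‖x‖ ^ 2) ^ (-(1 : ℝ)/2)) +
        (1 / 2) * (bubble 1 0 x) ^ 5 * ‖x‖) ∧
    0 < ∫ x : E3,
      bubble 1 0 x * (‖x‖⁻¹ - ((1 : ℝ) + ‖x‖ ^ 2) ^ (-(1 : ℝ)/2)) +
        (1 / 2) * (bubble 1 0 x) ^ 5 * ‖x‖ := by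
  classical
  set f : E3 → ℝ := fun x : E3 =>
      bubble 1 0 x * (‖x‖⁻¹ - ((1 : ℝ) + ‖x‖ ^ 2) ^ (-(1 : ℝ)/2)) +
        (1 / 2) * (bubble 1 0 x) ^ 5 * ‖x‖ with hfdef
  set c : ℝ := (3:ℝ) ^ ((1:ℝ)/4) with hcdef
  have hmeas : AEStronglyMeasurable f volume := by
    apply Measurable.aestronglyMeasurable
    unfold f
    unfold bubble
    fun_prop
  have hG : Integrable (fun x : E3 =>
      c * ∏ i, A2Aux.g1 (x i) + c ^ 5 / 2 * ∏ i, A2Aux.g2 (x i)) volume :=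
    ((A2Aux.prod_integrable _ A2Aux.g1_integrable).const_mul c).add
      ((A2Aux.prod_integrable _ A2Aux.g2_integrable).const_mul (c ^ 5 / 2))
  have hae : ∀ᵐ x : E3, ∀ i : Fin 3, x i ≠ 0 := by
    rw [ae_iff]
    have hsub : {x : E3 | ¬ ∀ i : Fin 3, x i ≠ 0} ⊆ ⋃ i : Fin 3, {x : E3 | x i = 0} := by
      intro x hx
      simp only [mem_setOf_eq, not_forall, not_not] at hx
      obtain ⟨i, hi⟩ := hx
      exact mem_iUnion.mpr ⟨i, hi⟩
    exact measure_mono_null hsub (measure_iUnion_null fun i => A2Aux.coord_zero_null i)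
  have h0ae : ∀ᵐ x : E3, x ≠ 0 := by
    rw [ae_iff]
    have hsub : {x : E3 | ¬ x ≠ 0} ⊆ {x : E3 | x 0 = 0} := by
      intro x hx
      simp only [mem_setOf_eq, not_not] at hx
      simp [hx]
    exact measure_mono_null hsub (A2Aux.coord_zero_null 0)
  have hint : Integrable f := by
    refine hG.mono' hmeas ?_
    filter_upwards [hae, h0ae] with x hx hx0
    rw [Real.norm_eq_abs, abs_of_pos (A2Aux.pointwise_pos x hx0)]
    exact A2Aux.pointwise_bound x hx
  refine ⟨hint, ?_⟩
  have hnonneg : 0 ≤ᵐ[volume] f := h0ae.mono fun x hx => (A2Aux.pointwise_pos x hx).le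
  rw [integral_pos_iff_support_of_nonneg_ae hnonneg hint]
  have hsub : Metric.ball (EuclideanSpace.single (0 : Fin 3) (2:ℝ) : E3) 1 ⊆
      Function.support f := by
    intro y hy
    have hy0 : y ≠ 0 := by
      intro h
      rw [h, Metric.mem_ball, dist_eq_norm, zero_sub, norm_neg,
        EuclideanSpace.norm_single] at hy
      norm_num at hy
    exact ne_of_gt (A2Aux.pointwise_pos y hy0)
  exact lt_of_lt_of_le (Metric.measure_ball_pos volume _ one_pos) (measure_mono hsub)

end
end
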